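/- A priori bounds for inhomogeneous equations. Let H satisfy Conditions A, B and C, let f ∈ C(Ω) ∩ L^∞(Ω), h ∈ C(∂Ω), and suppose Ω ⊂ B_{R₀}(z₀) for some z₀ ∈ ℝⁿ and R₀ > 0. Write f⁺ = max(f,0) and f⁻ = min(f,0). (i) If u ∈ usc(Ω̄) is a viscosity sub-solution of H(Du,D²u)+f(x)=0 in Ω with u ≤ h on ∂Ω, then sup_Ω u ≤ sup_{∂Ω} h + σ (sup_Ω f⁺)^{1/k} R₀^α. (ii) If u ∈ lsc(Ω̄) is a viscosity super-solution of H(Du,D²u)+f(x)=0 in Ω with u ≥ h on ∂Ω, then inf_Ω u ≥ inf_{∂Ω} h − σ |inf_Ω f⁻|^{1/k} R₀^α. -/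

import Mathlib

open Real Set Filter Matrix MeasureTheory

noncomputable section

abbrev EucSp (n : ℕ) := EuclideanSpace ℝ (Fin n)
abbrev Mat (n : ℕ) := Matrix (Fin n) (Fin n) ℝ

/-- A bounded domain: a nonempty bounded open connected set. -/
def IsBoundedDomain {n : ℕ} (Ω : Set (EucSp n)) : Prop :=
  IsOpen Ω ∧ IsConnected Ω ∧ Bornology.IsBounded Ω

/-- The Hessian matrix of `ψ` at `y`. -/
def hessianAt {n : ℕ} (ψ : EucSp n → ℝ) (y : EucSp n) : Mat n :=
  fun i j => iteratedFDeriv ℝ 2 ψ y ![EuclideanSpace.single i 1, EuclideanSpace.single j 1]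

/-- Viscosity sub-solution of `H(Du, D²u) + f(x,u) = 0` in `Ω`. -/
def ViscSubSoln {n : ℕ} (H : EucSp n → Mat n → ℝ) (f : EucSp n → ℝ → ℝ)
    (Ω : Set (EucSp n)) (u : EucSp n → ℝ) : Prop :=
  ∀ ψ : EucSp n → ℝ, ∀ y ∈ Ω, ContDiffAt ℝ 2 ψ y →
    IsLocalMax (fun x => u x - ψ x) y →
    0 ≤ H (gradient ψ y) (hessianAt ψ y) + f y (u y)

/-- Viscosity super-solution of `H(Du, D²u) + f(x,u) = 0` in `Ω`. -/
def ViscSuperSoln {n : ℕ} (H : EucSp n → Mat n → ℝ) (f : EucSp n → ℝ → ℝ)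
    (Ω : Set (EucSp n)) (u : EucSp n → ℝ) : Prop :=
  ∀ ψ : EucSp n → ℝ, ∀ y ∈ Ω, ContDiffAt ℝ 2 ψ y →
    IsLocalMin (fun x => u x - ψ x) y →
    H (gradient ψ y) (hessianAt ψ y) + f y (u y) ≤ 0

def ViscSoln {n : ℕ} (H : EucSp n → Mat n → ℝ) (f : EucSp n → ℝ → ℝ)
    (Ω : Set (EucSp n)) (u : EucSp n → ℝ) : Prop :=
  ViscSubSoln H f Ω u ∧ ViscSuperSoln H f Ω u

/-- `u ∈ C(closure Ω)` solves `H + f = 0` in `Ω` with `u = h` on `∂Ω`. -/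
def SolvesBVP {n : ℕ} (H : EucSp n → Mat n → ℝ) (f : EucSp n → ℝ → ℝ)
    (Ω : Set (EucSp n)) (u h : EucSp n → ℝ) : Prop :=
  ContinuousOn u (closure Ω) ∧ ViscSoln H f Ω u ∧ ∀ x ∈ frontier Ω, u x = h x

/-- Condition A (monotonicity). -/
def CondA {n : ℕ} (H : EucSp n → Mat n → ℝ) : Prop :=
  (∀ p, H p 0 = 0) ∧
  ∀ (p : EucSp n) (X Y : Mat n), X.IsSymm → Y.IsSymm → (Y - X).PosSemidef → H p X ≤ H p Y

/-- Condition B (homogeneity). -/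
def CondB {n : ℕ} (H : EucSp n → Mat n → ℝ) (k₁ k₂ : ℝ) : Prop :=
  0 ≤ k₁ ∧ 0 < k₂ ∧
  (∀ (θ : ℝ) (p : EucSp n) (X : Mat n), H (θ • p) X = |θ| ^ k₁ * H p X) ∧
  (∀ θ : ℝ, 0 < θ → ∀ (p : EucSp n) (X : Mat n), H p (θ • X) = θ ^ k₂ * H p X)

/-- The rank-one matrix `e ⊗ e`. -/
def outer {n : ℕ} (e : EucSp n) : Mat n := fun i j => e i * e j

def m1 {n : ℕ} (H : EucSp n → Mat n → ℝ) (s : ℝ) : ℝ :=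
  min (sInf {r | ∃ e : EucSp n, ‖e‖ = 1 ∧ r = H e (1 - s • outer e)})
      (-sSup {r | ∃ e : EucSp n, ‖e‖ = 1 ∧ r = H e (s • outer e - 1)})

def m2 {n : ℕ} (H : EucSp n → Mat n → ℝ) (s : ℝ) : ℝ :=
  max (sSup {r | ∃ e : EucSp n, ‖e‖ = 1 ∧ r = H e (1 - s • outer e)})
      (-sInf {r | ∃ e : EucSp n, ‖e‖ = 1 ∧ r = H e (s • outer e - 1)})

/-- Condition C (coercivity). -/
def CondC {n : ℕ} (H : EucSp n → Mat n → ℝ) (k₁ k₂ : ℝ) : Prop :=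
  0 < m1 H (k₁ / (k₁ + k₂)) ∧
  ∃ s₁ s₀ ℓ : ℝ, s₁ ≤ 1 ∧ 1 ≤ s₀ ∧ 0 < ℓ ∧
    (∀ s ≤ s₁, 0 < m1 H s) ∧ (∀ s, s₀ ≤ s → m2 H s < -ℓ)

def alphaC (k₁ k₂ : ℝ) : ℝ := (k₁ + 2 * k₂) / (k₁ + k₂)

def sigmaC {n : ℕ} (H : EucSp n → Mat n → ℝ) (k₁ k₂ : ℝ) : ℝ :=
  1 / (alphaC k₁ k₂ * m1 H (k₁ / (k₁ + k₂)) ^ (1 / (k₁ + k₂)))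

/-- Condition (i*). -/
def CondIStar {n : ℕ} (H : EucSp n → Mat n → ℝ) : Prop :=
  ∃ s : ℝ, 1 < s ∧ s < 2 ∧ m2 H s < 0

/-- Condition (ii*). -/
def CondIIStar {n : ℕ} (H : EucSp n → Mat n → ℝ) : Prop :=
  ∃ s : ℝ, 2 ≤ s ∧ ∀ t, s < t → m2 H t < 0

/-- Uniform outer ball condition with radius `ρ`. -/
def UnifOuterBall {n : ℕ} (Ω : Set (EucSp n)) (ρ : ℝ) : Prop :=
  ∀ y ∈ frontier Ω, ∃ z : EucSp n, Metric.ball z ρ ⊆ Ωᶜ ∧ y ∈ Metric.sphere z ρ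

/-- Standing assumption (*). -/
def Standing {n : ℕ} (H : EucSp n → Mat n → ℝ) (Ω : Set (EucSp n)) : Prop :=
  CondIStar H ∨ (CondIIStar H ∧ ∃ ρ > 0, UnifOuterBall Ω ρ)

/-- `spow t k = |t|^(k-1) t`. -/
def spow (t k : ℝ) : ℝ := |t| ^ (k - 1) * t

/-- The set of `λ > 0` such that `H(Du,D²u) + λ a(x)|u|^{k-1}u = 0` in `Ω`, `u = δ` on `∂Ω`,
has a positive solution. -/
def eigenSet {n : ℕ} (H : EucSp n → Mat n → ℝ) (Ω : Set (EucSp n)) (a : EucSp n → ℝ)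
    (k δ : ℝ) : Set ℝ :=
  {l : ℝ | 0 < l ∧ ∃ u : EucSp n → ℝ,
    SolvesBVP H (fun x t => l * a x * spow t k) Ω u (fun _ => δ) ∧
    ∀ x ∈ closure Ω, 0 < u x}

def lamOmega {n : ℕ} (H : EucSp n → Mat n → ℝ) (Ω : Set (EucSp n)) (a : EucSp n → ℝ)
    (k δ : ℝ) : ℝ :=
  sSup (eigenSet H Ω a k δ)

def toVec {n : ℕ} (p : EucSp n) : Fin n → ℝ := p
def ofVec {n : ℕ} (v : Fin n → ℝ) : EucSp n := WithLp.toLp 2 v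

/-- Condition D (invariance under rotations and reflections). -/
def CondD {n : ℕ} (H : EucSp n → Mat n → ℝ) : Prop :=
  ∀ Q : Mat n, Qᵀ * Q = 1 →
    ∀ (p : EucSp n) (X : Mat n), H (ofVec (Q.mulVec (toVec p))) (Q * X * Qᵀ) = H p X

section AuxLemmas

lemma usc_exists_max {X : Type*} [TopologicalSpace X] {φ : X → ℝ} {K : Set X}
    (hK : IsCompact K) (hne : K.Nonempty) (hφ : UpperSemicontinuousOn φ K) :
    ∃ y ∈ K, ∀ x ∈ K, φ x ≤ φ y := by
  by_contra hcon
  push_neg at hcon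
  have h1 : ∀ x (_ : x ∈ K), ∃ w, w ∈ K ∧ φ x < φ w := by
    intro x hx
    obtain ⟨y, hy, hlt⟩ := hcon x hx
    exact ⟨y, hy, hlt⟩
  choose w hwK hwlt using h1
  have h2 : ∀ x (hx : x ∈ K), ∃ U : Set X, IsOpen U ∧ x ∈ U ∧
      ∀ z ∈ U ∩ K, φ z < φ (w x hx) := by
    intro x hx
    have := hφ x hx (φ (w x hx)) (hwlt x hx)
    rw [eventually_iff_exists_mem] at this
    obtain ⟨V, hV, hVlt⟩ := this
    obtain ⟨U, hUo, hxU, hUV⟩ := mem_nhdsWithin.1 hV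
    exact ⟨U, hUo, hxU, fun z hz => hVlt z (hUV hz)⟩
  choose U hUo hxU hUlt using h2
  obtain ⟨t, hcov⟩ := hK.elim_nhds_subcover' U (fun x hx => (hUo x hx).mem_nhds (hxU x hx))
  have htne : t.Nonempty := by
    obtain ⟨x0, hx0⟩ := hne
    obtain ⟨i, hit, -⟩ := Set.mem_iUnion₂.1 (hcov hx0)
    exact ⟨i, hit⟩
  obtain ⟨i, hit, hmax⟩ := t.exists_max_image (fun j => φ (w j j.2)) htne
  have hzK : w i i.2 ∈ K := hwK i i.2
  obtain ⟨j, hjt, hjU⟩ := Set.mem_iUnion₂.1 (hcov hzK)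
  have := hUlt j j.2 (w i i.2) ⟨hjU, hzK⟩
  have := hmax j hjt
  linarith

lemma lsc_exists_min {X : Type*} [TopologicalSpace X] {φ : X → ℝ} {K : Set X}
    (hK : IsCompact K) (hne : K.Nonempty) (hφ : LowerSemicontinuousOn φ K) :
    ∃ y ∈ K, ∀ x ∈ K, φ y ≤ φ x := by
  have hneg : UpperSemicontinuousOn (fun x => -φ x) K := by
    intro x hx t ht
    have ht' : -t < φ x := by
      have : -φ x < t := ht
      linarith
    have := hφ x hx (-t) ht'
    filter_upwards [this] with z hz
    show -φ z < t
    linarith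
  obtain ⟨y, hyK, hy⟩ := usc_exists_max hK hne hneg
  exact ⟨y, hyK, fun x hx => by have := hy x hx; exact neg_le_neg_iff.1 this⟩

def innerSL' (n : ℕ) : EucSp n →L[ℝ] EucSp n →L[ℝ] ℝ := innerSL ℝ

@[simp] lemma innerSL'_apply {n : ℕ} (v w : EucSp n) : innerSL' n v w = inner ℝ v w := rfl

lemma gderiv {n : ℕ} (z x : EucSp n) :
    HasFDerivAt (fun w : EucSp n => (inner ℝ (w - z) (w - z) : ℝ))
      ((2:ℝ) • (innerSL' n (x - z))) x := by
  have hid : HasFDerivAt (fun w : EucSp n => w - z) (ContinuousLinearMap.id ℝ (EucSp n)) x :=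
    (hasFDerivAt_id x).sub_const z
  have h := hid.inner ℝ hid
  refine h.congr_fderiv ?_
  ext v
  simp only [ContinuousLinearMap.smul_apply, ContinuousLinearMap.comp_apply,
    ContinuousLinearMap.prod_apply, ContinuousLinearMap.id_apply, fderivInnerCLM_apply,
    innerSL'_apply, smul_eq_mul]
  rw [real_inner_comm v (x - z)]
  ring

lemma barrier_deriv {n : ℕ} (z y : EucSp n) (hyz : y ≠ z) (C c' β : ℝ) :
    ContDiffAt ℝ 2 (fun x : EucSp n => C + c' * (inner ℝ (x - z) (x - z) : ℝ) ^ β) y ∧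
    gradient (fun x : EucSp n => C + c' * (inner ℝ (x - z) (x - z) : ℝ) ^ β) y
      = ((c' * β * 2) * ((‖y - z‖ ^ 2 : ℝ)) ^ (β - 1)) • (y - z) ∧
    hessianAt (fun x : EucSp n => C + c' * (inner ℝ (x - z) (x - z) : ℝ) ^ β) y
      = ((c' * β * 2) * ((‖y - z‖ ^ 2 : ℝ)) ^ (β - 1)) • (1 : Mat n)
        + ((c' * β * 2) * ((β - 1) * ((‖y - z‖ ^ 2 : ℝ)) ^ (β - 2)) * 2) • outer (y - z) := by
  set g : EucSp n → ℝ := fun x => (inner ℝ (x - z) (x - z) : ℝ) with hg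
  set ψ : EucSp n → ℝ := fun x => C + c' * g x ^ β with hψ
  have hgval : ∀ x : EucSp n, g x = ‖x - z‖ ^ 2 := fun x => real_inner_self_eq_norm_sq _
  have hyz' : ‖y - z‖ ≠ 0 := by simpa [sub_eq_zero] using hyz
  have hgy : g y ≠ 0 := by rw [hgval]; positivity
  have hgc : Continuous g := by
    apply Continuous.inner <;> exact continuous_id.sub continuous_const
  have hne : ∀ᶠ x in nhds y, g x ≠ 0 := hgc.continuousAt.eventually_ne hgy
  set Φ : EucSp n → (EucSp n →L[ℝ] ℝ) :=
    fun x => ((c' * β * 2) * (g x) ^ (β - 1)) • innerSL' n (x - z) with hΦ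
  have hψd : ∀ x : EucSp n, g x ≠ 0 → HasFDerivAt ψ (Φ x) x := by
    intro x hx
    have h1 := (((gderiv z x).rpow_const (p := β) (Or.inl hx)).const_mul c').const_add C
    refine h1.congr_fderiv ?_
    ext v
    simp only [hΦ, ContinuousLinearMap.smul_apply, innerSL'_apply, smul_eq_mul]
    ring
  have hfd : fderiv ℝ ψ =ᶠ[nhds y] Φ := by
    filter_upwards [hne] with x hx
    exact (hψd x hx).fderiv
  have hV : HasFDerivAt (fun x : EucSp n => innerSL' n (x - z)) (innerSL' n) y := by
    have h2 := (innerSL' n).hasFDerivAt.comp y ((hasFDerivAt_id y).sub_const z)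
    rw [ContinuousLinearMap.comp_id] at h2
    exact h2
  have ha : HasFDerivAt (fun x : EucSp n => (c' * β * 2) * (g x) ^ (β - 1))
      ((c' * β * 2) • (((β - 1) * g y ^ (β - 1 - 1)) • ((2:ℝ) • innerSL' n (y - z)))) y :=
    ((gderiv z y).rpow_const (p := β - 1) (Or.inl hgy)).const_mul (c' * β * 2)
  have hΦd : HasFDerivAt Φ
      (((c' * β * 2) * (g y) ^ (β - 1)) • (innerSL' n)
        + ((c' * β * 2) • (((β - 1) * g y ^ (β - 1 - 1)) • ((2:ℝ) • innerSL' n (y - z)))).smulRight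
            (innerSL' n (y - z))) y := ha.smul hV
  have hsnd : fderiv ℝ (fderiv ℝ ψ) y
      = ((c' * β * 2) * (g y) ^ (β - 1)) • (innerSL' n)
        + ((c' * β * 2) • (((β - 1) * g y ^ (β - 1 - 1)) • ((2:ℝ) • innerSL' n (y - z)))).smulRight
            (innerSL' n (y - z)) := by
    rw [hfd.fderiv_eq]
    exact hΦd.fderiv
  refine ⟨?_, ?_, ?_⟩
  · have hgcd : ContDiffAt ℝ 2 g y := by
      apply ContDiffAt.inner ℝ <;> exact contDiffAt_id.sub contDiffAt_const
    have hrp : ContDiffAt ℝ 2 (fun s : ℝ => s ^ β) (g y) :=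
      Real.contDiffAt_rpow_const_of_ne hgy
    exact contDiffAt_const.add (contDiffAt_const.mul (hrp.comp y hgcd))
  · have h1 : HasFDerivAt ψ (Φ y) y := hψd y hgy
    have h2 : HasGradientAt ψ (((c' * β * 2) * ((‖y - z‖ ^ 2 : ℝ)) ^ (β - 1)) • (y - z)) y := by
      rw [hasGradientAt_iff_hasFDerivAt]
      refine h1.congr_fderiv ?_
      ext v
      simp only [InnerProductSpace.toDual_apply_apply, hΦ, ContinuousLinearMap.smul_apply,
        innerSL'_apply, smul_eq_mul, inner_smul_left, conj_trivial, hgval y]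
    exact h2.gradient
  · funext i j
    show iteratedFDeriv ℝ 2 ψ y ![EuclideanSpace.single i 1, EuclideanSpace.single j 1] = _
    rw [iteratedFDeriv_two_apply, hsnd]
    have hb : β - 1 - 1 = β - 2 := by ring
    simp only [Matrix.cons_val_zero, Matrix.cons_val_one, Matrix.head_cons,
      ContinuousLinearMap.add_apply, ContinuousLinearMap.smul_apply,
      ContinuousLinearMap.smulRight_apply, innerSL'_apply, smul_eq_mul,
      EuclideanSpace.inner_single_left, EuclideanSpace.inner_single_right, conj_trivial,
      EuclideanSpace.single_apply, hgval y, hb, Matrix.add_apply, Matrix.smul_apply,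
      Matrix.one_apply, outer, one_mul, mul_one]
    split_ifs <;> first | ring1 | (exfalso; simp_all)

lemma scalar_fact {c a k₁ k₂ r : ℝ} (hc : 0 < c) (ha : 0 < a) (hr : 0 < r)
    (hk : 0 < k₁ + k₂) (ha2 : (a - 2) * (k₁ + k₂) = -k₁) :
    (c * a * (r ^ 2) ^ (a / 2 - 1) * r) ^ k₁ * (c * a * (r ^ 2) ^ (a / 2 - 1)) ^ k₂
      = (c * a) ^ (k₁ + k₂) := by
  have hT : ((r : ℝ) ^ 2) ^ (a / 2 - 1) = r ^ (a - 2) := by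
    rw [← Real.rpow_natCast r 2, ← Real.rpow_mul hr.le]
    congr 1
    push_cast
    ring
  rw [hT]
  have h1 : c * a * r ^ (a - 2) * r = (c * a) * r ^ (a - 1) := by
    have : r ^ (a - 2) * r = r ^ (a - 1) := by
      rw [← Real.rpow_add_one hr.ne' (a - 2)]
      congr 1
      ring
    rw [mul_assoc, this]
  rw [h1]
  have hca : 0 < c * a := mul_pos hc ha
  rw [Real.mul_rpow hca.le (Real.rpow_nonneg hr.le _),
      Real.mul_rpow hca.le (Real.rpow_nonneg hr.le _),
      ← Real.rpow_mul hr.le, ← Real.rpow_mul hr.le]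
  have hexp : (a - 1) * k₁ + (a - 2) * k₂ = 0 := by
    have : (a - 1) * k₁ + (a - 2) * k₂ = (a - 2) * (k₁ + k₂) + k₁ := by ring
    rw [this, ha2]
    ring
  calc (c * a) ^ k₁ * r ^ ((a - 1) * k₁) * ((c * a) ^ k₂ * r ^ ((a - 2) * k₂))
      = ((c * a) ^ k₁ * (c * a) ^ k₂) * (r ^ ((a - 1) * k₁) * r ^ ((a - 2) * k₂)) := by ring
    _ = (c * a) ^ (k₁ + k₂) * r ^ ((a - 1) * k₁ + (a - 2) * k₂) := by
        rw [← Real.rpow_add hca, ← Real.rpow_add hr]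
    _ = (c * a) ^ (k₁ + k₂) := by rw [hexp, Real.rpow_zero, mul_one]

end AuxLemmas

section HvalLemmas

lemma Hval_core {n : ℕ} {H : EucSp n → Mat n → ℝ} {k₁ k₂ : ℝ} (hB : CondB H k₁ k₂)
    {c : ℝ} (hc : 0 < c) (z y : EucSp n) (hyz : y ≠ z) (C a : ℝ)
    (ha : 0 < a) (ha2 : (a - 2) * (k₁ + k₂) = -k₁) (sgn : Bool) :
    H (gradient (fun x : EucSp n =>
        C + (if sgn then -c else c) * (inner ℝ (x - z) (x - z) : ℝ) ^ (a / 2)) y)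
      (hessianAt (fun x : EucSp n =>
        C + (if sgn then -c else c) * (inner ℝ (x - z) (x - z) : ℝ) ^ (a / 2)) y)
    = (c * a) ^ (k₁ + k₂) *
        H (‖y - z‖⁻¹ • (y - z))
          (if sgn then ((k₁ / (k₁ + k₂)) • outer (‖y - z‖⁻¹ • (y - z)) - 1)
           else ((1 : Mat n) - (k₁ / (k₁ + k₂)) • outer (‖y - z‖⁻¹ • (y - z)))) := by
  obtain ⟨hk1, hk2, hhom1, hhom2⟩ := hB
  have hk : 0 < k₁ + k₂ := by linarith
  have hs : k₁ / (k₁ + k₂) = 2 - a := by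
    rw [div_eq_iff hk.ne']
    linear_combination ha2
  set c' : ℝ := if sgn then -c else c with hc'd
  obtain ⟨-, hgrad, hhess⟩ := barrier_deriv z y hyz C c' (a / 2)
  have hr : 0 < ‖y - z‖ := by
    rw [norm_pos_iff, sub_ne_zero]
    exact hyz
  set r := ‖y - z‖ with hrd
  set e : EucSp n := r⁻¹ • (y - z) with hed
  have hre : r • e = y - z := smul_inv_smul₀ hr.ne' (y - z)
  have hq : ∀ i, (y - z) i = r * e i := by
    intro i
    rw [← hre]
    rfl
  set T : ℝ := (r ^ 2 : ℝ) ^ (a / 2 - 1) with hTd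
  have hT : 0 < T := Real.rpow_pos_of_pos (by positivity) _
  set μ : ℝ := c * a * T with hμd
  have hμ : 0 < μ := by positivity
  have hT2 : ((r : ℝ) ^ 2) ^ (a / 2 - 2) * r ^ 2 = T := by
    have h := Real.rpow_add_one (by positivity : (r ^ 2 : ℝ) ≠ 0) (a / 2 - 2)
    rw [show a / 2 - 2 + 1 = a / 2 - 1 by ring] at h
    rw [hTd, h]
  have hBB : (c' * (a / 2) * 2) * ((a / 2 - 1) * (r ^ 2) ^ (a / 2 - 2)) * 2 * r ^ 2
      = (if sgn then μ * (k₁ / (k₁ + k₂)) else -(μ * (k₁ / (k₁ + k₂)))) := by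
    rw [hs, hμd, ← hT2, hc'd]
    cases sgn <;> simp only [if_true, if_false, Bool.false_eq_true, ite_true, ite_false] <;> ring
  have hgrad' : gradient (fun x : EucSp n => C + c' * (inner ℝ (x - z) (x - z) : ℝ) ^ (a / 2)) y
      = ((if sgn then -(μ * r) else μ * r)) • e := by
    rw [hgrad, ← hre, smul_smul]
    congr 1
    rw [hμd, hTd, hc'd]
    cases sgn <;> simp only [if_true, if_false, Bool.false_eq_true, ite_true, ite_false] <;> ring
  have hhess' : hessianAt (fun x : EucSp n => C + c' * (inner ℝ (x - z) (x - z) : ℝ) ^ (a / 2)) y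
      = μ • (if sgn then ((k₁ / (k₁ + k₂)) • outer e - 1)
             else ((1 : Mat n) - (k₁ / (k₁ + k₂)) • outer e)) := by
    rw [hhess]
    funext i j
    have hA : c' * (a / 2) * 2 * T = (if sgn then -μ else μ) := by
      rw [hμd, hc'd]
      cases sgn <;> simp only [if_true, if_false, Bool.false_eq_true, ite_true, ite_false] <;> ring
    cases sgn
    · simp only [Bool.false_eq_true, if_false, ite_false] at hBB hA ⊢
      show (c' * (a/2) * 2 * (r^2) ^ (a/2-1)) * (1 : Mat n) i j
          + (c' * (a/2) * 2 * ((a/2-1) * (r^2) ^ (a/2-2)) * 2) * ((y-z) i * (y-z) j)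
        = μ * ((1 : Mat n) i j - (k₁/(k₁+k₂)) * (e i * e j))
      rw [hq i, hq j, ← hTd, Matrix.one_apply]
      split_ifs with hij
      · linear_combination (e i * e j) * hBB + hA
      · linear_combination (e i * e j) * hBB
    · simp only [if_true, ite_true] at hBB hA ⊢
      show (c' * (a/2) * 2 * (r^2) ^ (a/2-1)) * (1 : Mat n) i j
          + (c' * (a/2) * 2 * ((a/2-1) * (r^2) ^ (a/2-2)) * 2) * ((y-z) i * (y-z) j)
        = μ * ((k₁/(k₁+k₂)) * (e i * e j) - (1 : Mat n) i j)
      rw [hq i, hq j, ← hTd, Matrix.one_apply]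
      split_ifs with hij
      · linear_combination (e i * e j) * hBB + hA
      · linear_combination (e i * e j) * hBB
  rw [hgrad', hhess']
  cases sgn
  · simp only [Bool.false_eq_true, if_false, ite_false]
    rw [show (μ * r) • e = (μ * r) • e from rfl, hhom1, hhom2 μ hμ]
    rw [show |μ * r| = μ * r from abs_of_pos (by positivity)]
    rw [← mul_assoc]
    congr 1
    rw [hμd, hTd]
    exact scalar_fact hc ha hr hk ha2
  · simp only [if_true, ite_true]
    rw [hhom1, hhom2 μ hμ]
    rw [show |(-(μ * r))| = μ * r by rw [abs_neg]; exact abs_of_pos (by positivity)]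
    rw [← mul_assoc]
    congr 1
    rw [hμd, hTd]
    exact scalar_fact hc ha hr hk ha2

lemma m1_bounds {n : ℕ} {H : EucSp n → Mat n → ℝ}
    (hH : Continuous fun q : EucSp n × Mat n => H q.1 q.2) (s : ℝ) {e : EucSp n}
    (he : ‖e‖ = 1) :
    H e (s • outer e - 1) ≤ -(m1 H s) ∧ m1 H s ≤ H e ((1 : Mat n) - s • outer e) := by
  have hproj : ∀ i : Fin n, Continuous fun v : EucSp n => v i := by
    intro i
    exact (continuous_apply i).comp (PiLp.continuous_ofLp (p := 2) (β := fun _ : Fin n => ℝ))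
  have hmat1 : Continuous fun v : EucSp n => ((1 : Mat n) - s • outer v) := by
    apply continuous_matrix
    intro i j
    show Continuous fun v : EucSp n => (1 : Mat n) i j - s * (v i * v j)
    exact continuous_const.sub (continuous_const.mul ((hproj i).mul (hproj j)))
  have hmat2 : Continuous fun v : EucSp n => (s • outer v - (1 : Mat n)) := by
    apply continuous_matrix
    intro i j
    show Continuous fun v : EucSp n => s * (v i * v j) - (1 : Mat n) i j
    exact (continuous_const.mul ((hproj i).mul (hproj j))).sub continuous_const
  have hcont1 : Continuous fun v : EucSp n => H v ((1 : Mat n) - s • outer v) :=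
    hH.comp (continuous_id.prodMk hmat1)
  have hcont2 : Continuous fun v : EucSp n => H v (s • outer v - (1 : Mat n)) :=
    hH.comp (continuous_id.prodMk hmat2)
  have hsph : IsCompact {v : EucSp n | ‖v‖ = 1} := by
    have hset : {v : EucSp n | ‖v‖ = 1} = Metric.sphere 0 1 := by
      ext v
      simp [mem_sphere_zero_iff_norm]
    rw [hset]
    exact isCompact_sphere 0 1
  have hS1 : {r | ∃ e : EucSp n, ‖e‖ = 1 ∧ r = H e (1 - s • outer e)}
      = (fun v : EucSp n => H v ((1 : Mat n) - s • outer v)) '' {v : EucSp n | ‖v‖ = 1} := by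
    ext r
    constructor
    · rintro ⟨e, he1, rfl⟩
      exact ⟨e, he1, rfl⟩
    · rintro ⟨e, he1, rfl⟩
      exact ⟨e, he1, rfl⟩
  have hS2 : {r | ∃ e : EucSp n, ‖e‖ = 1 ∧ r = H e (s • outer e - 1)}
      = (fun v : EucSp n => H v (s • outer v - (1 : Mat n))) '' {v : EucSp n | ‖v‖ = 1} := by
    ext r
    constructor
    · rintro ⟨e, he1, rfl⟩
      exact ⟨e, he1, rfl⟩
    · rintro ⟨e, he1, rfl⟩
      exact ⟨e, he1, rfl⟩
  have hbdd1 : BddBelow {r | ∃ e : EucSp n, ‖e‖ = 1 ∧ r = H e (1 - s • outer e)} := by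
    rw [hS1]
    exact (hsph.image hcont1).bddBelow
  have hbdd2 : BddAbove {r | ∃ e : EucSp n, ‖e‖ = 1 ∧ r = H e (s • outer e - 1)} := by
    rw [hS2]
    exact (hsph.image hcont2).bddAbove
  constructor
  · have h1 : H e (s • outer e - 1) ≤ sSup {r | ∃ e : EucSp n, ‖e‖ = 1 ∧ r = H e (s • outer e - 1)} :=
      le_csSup hbdd2 ⟨e, he, rfl⟩
    have h2 : m1 H s ≤ -sSup {r | ∃ e : EucSp n, ‖e‖ = 1 ∧ r = H e (s • outer e - 1)} :=
      min_le_right _ _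
    linarith
  · have h1 : sInf {r | ∃ e : EucSp n, ‖e‖ = 1 ∧ r = H e (1 - s • outer e)}
        ≤ H e ((1 : Mat n) - s • outer e) := csInf_le hbdd1 ⟨e, he, rfl⟩
    have h2 : m1 H s ≤ sInf {r | ∃ e : EucSp n, ‖e‖ = 1 ∧ r = H e (1 - s • outer e)} :=
      min_le_left _ _
    linarith

end HvalLemmas

open Topology in
lemma partI {n : ℕ} (hn : 2 ≤ n) (Ω : Set (EucSp n)) (hΩ : IsBoundedDomain Ω)
    (H : EucSp n → Mat n → ℝ) (hH : Continuous fun q : EucSp n × Mat n => H q.1 q.2)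
    (k₁ k₂ : ℝ) (hB : CondB H k₁ k₂) (hC : CondC H k₁ k₂)
    (f : EucSp n → ℝ) (hfb : ∃ M : ℝ, ∀ x ∈ Ω, |f x| ≤ M)
    (h : EucSp n → ℝ) (hhc : ContinuousOn h (frontier Ω))
    (z₀ : EucSp n) (R₀ : ℝ) (hR₀ : 0 < R₀) (hΩR : Ω ⊆ Metric.ball z₀ R₀)
    (u : EucSp n → ℝ) (husc : UpperSemicontinuousOn u (closure Ω))
    (hsub : ViscSubSoln H (fun x _ => f x) Ω u) (hbc : ∀ x ∈ frontier Ω, u x ≤ h x)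
    (x : EucSp n) (hx : x ∈ Ω) :
    u x ≤ sSup (h '' frontier Ω) +
      sigmaC H k₁ k₂ * sSup ((fun x => max (f x) 0) '' Ω) ^ (1 / (k₁ + k₂)) *
        R₀ ^ alphaC k₁ k₂ := by
  have hk1 : 0 ≤ k₁ := hB.1
  have hk2 : 0 < k₂ := hB.2.1
  have hk : 0 < k₁ + k₂ := by linarith
  have hm1 : 0 < m1 H (k₁ / (k₁ + k₂)) := hC.1
  have hα : 0 < alphaC k₁ k₂ := by
    unfold alphaC
    positivity
  have ha2 : (alphaC k₁ k₂ - 2) * (k₁ + k₂) = -k₁ := by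
    unfold alphaC
    field_simp
    ring
  have hσ : 0 < sigmaC H k₁ k₂ := by
    unfold sigmaC
    have h2 : (0:ℝ) < m1 H (k₁ / (k₁ + k₂)) ^ (1 / (k₁ + k₂)) := Real.rpow_pos_of_pos hm1 _
    positivity
  have hKc : IsCompact (closure Ω) := hΩ.2.2.isCompact_closure
  have hKne : (closure Ω).Nonempty := hΩ.2.1.nonempty.closure
  have hΩK : Ω ⊆ closure Ω := subset_closure
  have hKR : ∀ w ∈ closure Ω, ‖w - z₀‖ ≤ R₀ := by
    intro w hw
    have h1 : closure Ω ⊆ Metric.closedBall z₀ R₀ :=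
      (closure_mono hΩR).trans Metric.closure_ball_subset_closedBall
    have := h1 hw
    rwa [Metric.mem_closedBall, dist_eq_norm] at this
  have hfrK : frontier Ω ⊆ closure Ω := frontier_subset_closure
  have hfrc : IsCompact (frontier Ω) := hKc.of_isClosed_subset isClosed_frontier hfrK
  have hn0 : 0 < n := by omega
  have he₀ : ‖EuclideanSpace.single (⟨0, hn0⟩ : Fin n) (1:ℝ)‖ = 1 := by
    rw [EuclideanSpace.norm_single]; norm_num
  set e₀ : EucSp n := EuclideanSpace.single (⟨0, hn0⟩ : Fin n) (1:ℝ) with he₀d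
  have hfrne : (frontier Ω).Nonempty := by
    refine nonempty_frontier_iff.2 ⟨hΩ.2.1.nonempty, ?_⟩
    intro huniv
    have hmem : z₀ + (R₀ + 1) • e₀ ∈ Ω := by rw [huniv]; trivial
    have h2 := hΩR hmem
    rw [Metric.mem_ball, dist_eq_norm, add_sub_cancel_left, norm_smul, he₀, mul_one,
      Real.norm_eq_abs, abs_of_pos (by linarith)] at h2
    linarith
  set Mh := sSup (h '' frontier Ω) with hMhd
  have hbddh : BddAbove (h '' frontier Ω) := (hfrc.image_of_continuousOn hhc).bddAbove
  have hMh : ∀ ξ ∈ frontier Ω, h ξ ≤ Mh := fun ξ hξ => le_csSup hbddh ⟨ξ, hξ, rfl⟩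
  set F := sSup ((fun x => max (f x) 0) '' Ω) with hFd
  obtain ⟨M, hM⟩ := hfb
  have hbddF : BddAbove ((fun x => max (f x) 0) '' Ω) := by
    refine ⟨max M 0, ?_⟩
    rintro r ⟨w, hw, rfl⟩
    exact max_le_max (abs_le.1 (hM w hw)).2 le_rfl
  have hFf : ∀ w ∈ Ω, f w ≤ F :=
    fun w hw => le_trans (le_max_left _ _) (le_csSup hbddF ⟨w, hw, rfl⟩)
  have hF0 : 0 ≤ F := le_trans (le_max_right _ _) (le_csSup hbddF ⟨x, hx, rfl⟩)
  have main : ∀ ε : ℝ, 0 < ε →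
      u x ≤ Mh + (sigmaC H k₁ k₂ * (F + ε) ^ (1 / (k₁ + k₂))) * (R₀ + ε) ^ alphaC k₁ k₂ := by
    intro ε hε
    set c := sigmaC H k₁ k₂ * (F + ε) ^ (1 / (k₁ + k₂)) with hcd
    have hc : 0 < c := mul_pos hσ (Real.rpow_pos_of_pos (by linarith) _)
    have hkey : (c * alphaC k₁ k₂) ^ (k₁ + k₂) * m1 H (k₁ / (k₁ + k₂)) = F + ε := by
      have hcα : c * alphaC k₁ k₂
          = ((F + ε) / m1 H (k₁ / (k₁ + k₂))) ^ (1 / (k₁ + k₂)) := by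
        rw [Real.div_rpow (by linarith) hm1.le, hcd]
        unfold sigmaC
        have h2 : (0:ℝ) < m1 H (k₁ / (k₁ + k₂)) ^ (1 / (k₁ + k₂)) :=
          Real.rpow_pos_of_pos hm1 _
        field_simp
      rw [hcα, ← Real.rpow_mul (by positivity : (0:ℝ) ≤ (F + ε) / m1 H (k₁ / (k₁ + k₂))),
        one_div_mul_cancel hk.ne', Real.rpow_one, div_mul_cancel₀ _ hm1.ne']
    have hcenter : ∀ z : EucSp n, (∀ w ∈ closure Ω, ‖w - z‖ ≤ R₀ + ε) →
        (∃ yb ∈ frontier Ω, ∀ w ∈ closure Ω,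
            u w + c * ‖w - z‖ ^ alphaC k₁ k₂ ≤ u yb + c * ‖yb - z‖ ^ alphaC k₁ k₂) ∨
        (z ∈ Ω ∧ ∀ w ∈ closure Ω, u w + c * ‖w - z‖ ^ alphaC k₁ k₂ ≤ u z) := by
      intro z hzR
      have hbcont : Continuous fun w : EucSp n => c * ‖w - z‖ ^ alphaC k₁ k₂ :=
        continuous_const.mul
          (((continuous_id.sub continuous_const).norm).rpow_const (fun w => Or.inr hα.le))
      have hφusc : UpperSemicontinuousOn
          (fun w => u w + c * ‖w - z‖ ^ alphaC k₁ k₂) (closure Ω) :=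
        husc.add (hbcont.continuousOn.upperSemicontinuousOn)
      obtain ⟨y₀, hy₀K, hy₀max⟩ := usc_exists_max hKc hKne hφusc
      by_cases hy₀fr : y₀ ∈ frontier Ω
      · exact Or.inl ⟨y₀, hy₀fr, hy₀max⟩
      · have hy₀Ω : y₀ ∈ Ω := by
          by_contra hcon
          exact hy₀fr (by rw [hΩ.1.frontier_eq]; exact ⟨hy₀K, hcon⟩)
        by_cases hyz : y₀ = z
        · subst hyz
          refine Or.inr ⟨hy₀Ω, fun w hw => ?_⟩
          have h2 := hy₀max w hw
          rwa [sub_self, norm_zero, Real.zero_rpow hα.ne', mul_zero, add_zero] at h2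
        · exfalso
          obtain ⟨hcd2, -, -⟩ := barrier_deriv z y₀ hyz
            (u y₀ + c * ‖y₀ - z‖ ^ alphaC k₁ k₂) (-c) (alphaC k₁ k₂ / 2)
          have hval : ∀ w : EucSp n,
              (inner ℝ (w - z) (w - z) : ℝ) ^ (alphaC k₁ k₂ / 2) = ‖w - z‖ ^ alphaC k₁ k₂ := by
            intro w
            rw [real_inner_self_eq_norm_sq, ← Real.rpow_natCast (‖w - z‖) 2,
              ← Real.rpow_mul (norm_nonneg _)]
            congr 1
            push_cast
            ring
          have hloc : IsLocalMax (fun w => u w -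
              ((u y₀ + c * ‖y₀ - z‖ ^ alphaC k₁ k₂)
                + (-c) * (inner ℝ (w - z) (w - z) : ℝ) ^ (alphaC k₁ k₂ / 2))) y₀ := by
            filter_upwards [hΩ.1.mem_nhds hy₀Ω] with w hw
            have h1 := hy₀max w (hΩK hw)
            simp only [hval]
            linarith [h1]
          have h0 := hsub _ y₀ hy₀Ω hcd2 hloc
          have hHv := Hval_core hB hc z y₀ hyz (u y₀ + c * ‖y₀ - z‖ ^ alphaC k₁ k₂)
            (alphaC k₁ k₂) hα ha2 true
          simp only [if_true, ite_true] at hHv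
          have hee : ‖(‖y₀ - z‖⁻¹ • (y₀ - z) : EucSp n)‖ = 1 := by
            rw [norm_smul, norm_inv, norm_norm,
              inv_mul_cancel₀ (norm_ne_zero_iff.2 (sub_ne_zero.2 hyz))]
          have hm := (m1_bounds hH (k₁ / (k₁ + k₂)) hee).1
          have hHle : H (gradient (fun w : EucSp n =>
                (u y₀ + c * ‖y₀ - z‖ ^ alphaC k₁ k₂)
                  + (-c) * (inner ℝ (w - z) (w - z) : ℝ) ^ (alphaC k₁ k₂ / 2)) y₀)
              (hessianAt (fun w : EucSp n =>
                (u y₀ + c * ‖y₀ - z‖ ^ alphaC k₁ k₂)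
                  + (-c) * (inner ℝ (w - z) (w - z) : ℝ) ^ (alphaC k₁ k₂ / 2)) y₀)
              ≤ -(F + ε) := by
            rw [hHv]
            calc (c * alphaC k₁ k₂) ^ (k₁ + k₂) *
                H (‖y₀ - z‖⁻¹ • (y₀ - z))
                  ((k₁ / (k₁ + k₂)) • outer (‖y₀ - z‖⁻¹ • (y₀ - z)) - 1)
                ≤ (c * alphaC k₁ k₂) ^ (k₁ + k₂) * (-(m1 H (k₁ / (k₁ + k₂)))) :=
                  mul_le_mul_of_nonneg_left hm (Real.rpow_nonneg (by positivity) _)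
              _ = -(F + ε) := by rw [mul_neg, hkey]
          have h0' : (0:ℝ) ≤ H (gradient (fun w : EucSp n =>
                (u y₀ + c * ‖y₀ - z‖ ^ alphaC k₁ k₂)
                  + (-c) * (inner ℝ (w - z) (w - z) : ℝ) ^ (alphaC k₁ k₂ / 2)) y₀)
              (hessianAt (fun w : EucSp n =>
                (u y₀ + c * ‖y₀ - z‖ ^ alphaC k₁ k₂)
                  + (-c) * (inner ℝ (w - z) (w - z) : ℝ) ^ (alphaC k₁ k₂ / 2)) y₀) + f y₀ := h0
          have hfy := hFf y₀ hy₀Ω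
          linarith
    have hz₀R : ∀ w ∈ closure Ω, ‖w - z₀‖ ≤ R₀ + ε := fun w hw =>
      le_trans (hKR w hw) (by linarith)
    have hz₁R : ∀ w ∈ closure Ω, ‖w - (z₀ + ε • e₀)‖ ≤ R₀ + ε := by
      intro w hw
      have h1 : w - (z₀ + ε • e₀) = (w - z₀) - ε • e₀ := by abel
      rw [h1]
      refine le_trans (norm_sub_le _ _) ?_
      rw [norm_smul, he₀, mul_one, Real.norm_eq_abs, abs_of_pos hε]
      exact add_le_add (hKR w hw) le_rfl
    have hd1 : ‖(z₀ + ε • e₀) - z₀‖ = ε := by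
      rw [add_sub_cancel_left, norm_smul, he₀, mul_one, Real.norm_eq_abs, abs_of_pos hε]
    have hd2 : ‖z₀ - (z₀ + ε • e₀)‖ = ε := by
      rw [show z₀ - (z₀ + ε • e₀) = -(ε • e₀) by abel, norm_neg, norm_smul, he₀, mul_one,
        Real.norm_eq_abs, abs_of_pos hε]
    have hfinal : ∀ z : EucSp n, (∀ w ∈ closure Ω, ‖w - z‖ ≤ R₀ + ε) →
        (∃ yb ∈ frontier Ω, ∀ w ∈ closure Ω,
            u w + c * ‖w - z‖ ^ alphaC k₁ k₂ ≤ u yb + c * ‖yb - z‖ ^ alphaC k₁ k₂) →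
        u x ≤ Mh + c * (R₀ + ε) ^ alphaC k₁ k₂ := by
      rintro z hzR ⟨yb, hybfr, hyb⟩
      have h1 := hyb x (hΩK hx)
      have h2 : u yb ≤ Mh := le_trans (hbc yb hybfr) (hMh yb hybfr)
      have h3 : ‖yb - z‖ ^ alphaC k₁ k₂ ≤ (R₀ + ε) ^ alphaC k₁ k₂ :=
        Real.rpow_le_rpow (norm_nonneg _) (hzR yb (hfrK hybfr)) hα.le
      have h4 : (0:ℝ) ≤ c * ‖x - z‖ ^ alphaC k₁ k₂ := by positivity
      have h5 : c * ‖yb - z‖ ^ alphaC k₁ k₂ ≤ c * (R₀ + ε) ^ alphaC k₁ k₂ :=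
        mul_le_mul_of_nonneg_left h3 hc.le
      linarith
    rcases hcenter z₀ hz₀R with hgood | ⟨hz₀Ω, hb₀⟩
    · exact hfinal z₀ hz₀R hgood
    · rcases hcenter (z₀ + ε • e₀) hz₁R with hgood | ⟨hz₁Ω, hb₁⟩
      · exact hfinal (z₀ + ε • e₀) hz₁R hgood
      · exfalso
        have h1 := hb₀ (z₀ + ε • e₀) (hΩK hz₁Ω)
        have h2 := hb₁ z₀ (hΩK hz₀Ω)
        rw [hd1] at h1
        rw [hd2] at h2
        have h3 : 0 < c * ε ^ alphaC k₁ k₂ := by positivity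
        linarith
  have hlim : Tendsto (fun m : ℕ => Mh +
      (sigmaC H k₁ k₂ * (F + 1/((m:ℝ)+1)) ^ (1 / (k₁ + k₂))) * (R₀ + 1/((m:ℝ)+1)) ^ alphaC k₁ k₂)
      atTop (𝓝 (Mh + sigmaC H k₁ k₂ * F ^ (1 / (k₁ + k₂)) * R₀ ^ alphaC k₁ k₂)) := by
    have h0 : Tendsto (fun m : ℕ => 1/((m:ℝ)+1)) atTop (𝓝 0) :=
      tendsto_one_div_add_atTop_nhds_zero_nat
    have hF : Tendsto (fun m : ℕ => (F + 1/((m:ℝ)+1)) ^ (1 / (k₁ + k₂))) atTop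
        (𝓝 (F ^ (1 / (k₁ + k₂)))) := by
      have h1 : Tendsto (fun m : ℕ => F + 1/((m:ℝ)+1)) atTop (𝓝 (F + 0)) :=
        tendsto_const_nhds.add h0
      rw [add_zero] at h1
      exact (Real.continuousAt_rpow_const F _ (Or.inr (by positivity))).tendsto.comp h1
    have hR : Tendsto (fun m : ℕ => (R₀ + 1/((m:ℝ)+1)) ^ alphaC k₁ k₂) atTop
        (𝓝 (R₀ ^ alphaC k₁ k₂)) := by
      have h1 : Tendsto (fun m : ℕ => R₀ + 1/((m:ℝ)+1)) atTop (𝓝 (R₀ + 0)) :=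
        tendsto_const_nhds.add h0
      rw [add_zero] at h1
      exact (Real.continuousAt_rpow_const R₀ _ (Or.inl hR₀.ne')).tendsto.comp h1
    exact tendsto_const_nhds.add ((tendsto_const_nhds.mul hF).mul hR)
  exact ge_of_tendsto hlim (Eventually.of_forall fun m => main (1/((m:ℝ)+1)) (by positivity))

open Topology in
lemma partII {n : ℕ} (hn : 2 ≤ n) (Ω : Set (EucSp n)) (hΩ : IsBoundedDomain Ω)
    (H : EucSp n → Mat n → ℝ) (hH : Continuous fun q : EucSp n × Mat n => H q.1 q.2)
    (k₁ k₂ : ℝ) (hB : CondB H k₁ k₂) (hC : CondC H k₁ k₂)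
    (f : EucSp n → ℝ) (hfb : ∃ M : ℝ, ∀ x ∈ Ω, |f x| ≤ M)
    (h : EucSp n → ℝ) (hhc : ContinuousOn h (frontier Ω))
    (z₀ : EucSp n) (R₀ : ℝ) (hR₀ : 0 < R₀) (hΩR : Ω ⊆ Metric.ball z₀ R₀)
    (u : EucSp n → ℝ) (hlsc : LowerSemicontinuousOn u (closure Ω))
    (hsup : ViscSuperSoln H (fun x _ => f x) Ω u) (hbc : ∀ x ∈ frontier Ω, h x ≤ u x)
    (x : EucSp n) (hx : x ∈ Ω) :
    sInf (h '' frontier Ω) -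
      sigmaC H k₁ k₂ * |sInf ((fun x => min (f x) 0) '' Ω)| ^ (1 / (k₁ + k₂)) *
        R₀ ^ alphaC k₁ k₂ ≤ u x := by
  have hk1 : 0 ≤ k₁ := hB.1
  have hk2 : 0 < k₂ := hB.2.1
  have hk : 0 < k₁ + k₂ := by linarith
  have hm1 : 0 < m1 H (k₁ / (k₁ + k₂)) := hC.1
  have hα : 0 < alphaC k₁ k₂ := by
    unfold alphaC
    positivity
  have ha2 : (alphaC k₁ k₂ - 2) * (k₁ + k₂) = -k₁ := by
    unfold alphaC
    field_simp
    ring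
  have hσ : 0 < sigmaC H k₁ k₂ := by
    unfold sigmaC
    have h2 : (0:ℝ) < m1 H (k₁ / (k₁ + k₂)) ^ (1 / (k₁ + k₂)) := Real.rpow_pos_of_pos hm1 _
    positivity
  have hKc : IsCompact (closure Ω) := hΩ.2.2.isCompact_closure
  have hKne : (closure Ω).Nonempty := hΩ.2.1.nonempty.closure
  have hΩK : Ω ⊆ closure Ω := subset_closure
  have hKR : ∀ w ∈ closure Ω, ‖w - z₀‖ ≤ R₀ := by
    intro w hw
    have h1 : closure Ω ⊆ Metric.closedBall z₀ R₀ :=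
      (closure_mono hΩR).trans Metric.closure_ball_subset_closedBall
    have := h1 hw
    rwa [Metric.mem_closedBall, dist_eq_norm] at this
  have hfrK : frontier Ω ⊆ closure Ω := frontier_subset_closure
  have hfrc : IsCompact (frontier Ω) := hKc.of_isClosed_subset isClosed_frontier hfrK
  have hn0 : 0 < n := by omega
  have he₀ : ‖EuclideanSpace.single (⟨0, hn0⟩ : Fin n) (1:ℝ)‖ = 1 := by
    rw [EuclideanSpace.norm_single]; norm_num
  set e₀ : EucSp n := EuclideanSpace.single (⟨0, hn0⟩ : Fin n) (1:ℝ) with he₀d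
  set mh := sInf (h '' frontier Ω) with hmhd
  have hbddh : BddBelow (h '' frontier Ω) := (hfrc.image_of_continuousOn hhc).bddBelow
  have hmh : ∀ ξ ∈ frontier Ω, mh ≤ h ξ := fun ξ hξ => csInf_le hbddh ⟨ξ, hξ, rfl⟩
  obtain ⟨M, hM⟩ := hfb
  have hbddG : BddBelow ((fun x => min (f x) 0) '' Ω) := by
    refine ⟨-M, ?_⟩
    rintro r ⟨w, hw, rfl⟩
    have h1 := (abs_le.1 (hM w hw)).1
    have h2 : (0:ℝ) ≤ M := le_trans (abs_nonneg _) (hM w hw)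
    exact le_min h1 (by linarith)
  have hsInf0 : sInf ((fun x => min (f x) 0) '' Ω) ≤ 0 :=
    le_trans (csInf_le hbddG ⟨x, hx, rfl⟩) (min_le_right _ _)
  set G := |sInf ((fun x => min (f x) 0) '' Ω)| with hGd
  have hGval : G = -(sInf ((fun x => min (f x) 0) '' Ω)) := abs_of_nonpos hsInf0
  have hGf : ∀ w ∈ Ω, -G ≤ f w := by
    intro w hw
    have h1 : sInf ((fun x => min (f x) 0) '' Ω) ≤ min (f w) 0 := csInf_le hbddG ⟨w, hw, rfl⟩
    have h2 : min (f w) 0 ≤ f w := min_le_left _ _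
    rw [hGval]
    linarith
  have hG0 : 0 ≤ G := abs_nonneg _
  have main : ∀ ε : ℝ, 0 < ε →
      mh - (sigmaC H k₁ k₂ * (G + ε) ^ (1 / (k₁ + k₂))) * (R₀ + ε) ^ alphaC k₁ k₂ ≤ u x := by
    intro ε hε
    set c := sigmaC H k₁ k₂ * (G + ε) ^ (1 / (k₁ + k₂)) with hcd
    have hc : 0 < c := mul_pos hσ (Real.rpow_pos_of_pos (by linarith) _)
    have hkey : (c * alphaC k₁ k₂) ^ (k₁ + k₂) * m1 H (k₁ / (k₁ + k₂)) = G + ε := by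
      have hcα : c * alphaC k₁ k₂
          = ((G + ε) / m1 H (k₁ / (k₁ + k₂))) ^ (1 / (k₁ + k₂)) := by
        rw [Real.div_rpow (by linarith) hm1.le, hcd]
        unfold sigmaC
        have h2 : (0:ℝ) < m1 H (k₁ / (k₁ + k₂)) ^ (1 / (k₁ + k₂)) :=
          Real.rpow_pos_of_pos hm1 _
        field_simp
      rw [hcα, ← Real.rpow_mul (by positivity : (0:ℝ) ≤ (G + ε) / m1 H (k₁ / (k₁ + k₂))),
        one_div_mul_cancel hk.ne', Real.rpow_one, div_mul_cancel₀ _ hm1.ne']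
    have hcenter : ∀ z : EucSp n, (∀ w ∈ closure Ω, ‖w - z‖ ≤ R₀ + ε) →
        (∃ yb ∈ frontier Ω, ∀ w ∈ closure Ω,
            u yb + -(c * ‖yb - z‖ ^ alphaC k₁ k₂) ≤ u w + -(c * ‖w - z‖ ^ alphaC k₁ k₂)) ∨
        (z ∈ Ω ∧ ∀ w ∈ closure Ω, u z ≤ u w + -(c * ‖w - z‖ ^ alphaC k₁ k₂)) := by
      intro z hzR
      have hbcont : Continuous fun w : EucSp n => -(c * ‖w - z‖ ^ alphaC k₁ k₂) :=
        (continuous_const.mul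
          (((continuous_id.sub continuous_const).norm).rpow_const (fun w => Or.inr hα.le))).neg
      have hφlsc : LowerSemicontinuousOn
          (fun w => u w + -(c * ‖w - z‖ ^ alphaC k₁ k₂)) (closure Ω) :=
        hlsc.add (hbcont.continuousOn.lowerSemicontinuousOn)
      obtain ⟨y₀, hy₀K, hy₀min⟩ := lsc_exists_min hKc hKne hφlsc
      by_cases hy₀fr : y₀ ∈ frontier Ω
      · exact Or.inl ⟨y₀, hy₀fr, hy₀min⟩
      · have hy₀Ω : y₀ ∈ Ω := by
          by_contra hcon
          exact hy₀fr (by rw [hΩ.1.frontier_eq]; exact ⟨hy₀K, hcon⟩)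
        by_cases hyz : y₀ = z
        · subst hyz
          refine Or.inr ⟨hy₀Ω, fun w hw => ?_⟩
          have h2 := hy₀min w hw
          rwa [sub_self, norm_zero, Real.zero_rpow hα.ne', mul_zero, neg_zero, add_zero] at h2
        · exfalso
          obtain ⟨hcd2, -, -⟩ := barrier_deriv z y₀ hyz
            (u y₀ + -(c * ‖y₀ - z‖ ^ alphaC k₁ k₂)) c (alphaC k₁ k₂ / 2)
          have hval : ∀ w : EucSp n,
              (inner ℝ (w - z) (w - z) : ℝ) ^ (alphaC k₁ k₂ / 2) = ‖w - z‖ ^ alphaC k₁ k₂ := by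
            intro w
            rw [real_inner_self_eq_norm_sq, ← Real.rpow_natCast (‖w - z‖) 2,
              ← Real.rpow_mul (norm_nonneg _)]
            congr 1
            push_cast
            ring
          have hloc : IsLocalMin (fun w => u w -
              ((u y₀ + -(c * ‖y₀ - z‖ ^ alphaC k₁ k₂))
                + c * (inner ℝ (w - z) (w - z) : ℝ) ^ (alphaC k₁ k₂ / 2))) y₀ := by
            filter_upwards [hΩ.1.mem_nhds hy₀Ω] with w hw
            have h1 := hy₀min w (hΩK hw)
            simp only [hval]
            linarith [h1]
          have h0 := hsup _ y₀ hy₀Ω hcd2 hloc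
          have hHv := Hval_core hB hc z y₀ hyz (u y₀ + -(c * ‖y₀ - z‖ ^ alphaC k₁ k₂))
            (alphaC k₁ k₂) hα ha2 false
          simp only [Bool.false_eq_true, if_false, ite_false] at hHv
          have hee : ‖(‖y₀ - z‖⁻¹ • (y₀ - z) : EucSp n)‖ = 1 := by
            rw [norm_smul, norm_inv, norm_norm,
              inv_mul_cancel₀ (norm_ne_zero_iff.2 (sub_ne_zero.2 hyz))]
          have hm := (m1_bounds hH (k₁ / (k₁ + k₂)) hee).2
          have hHge : G + ε ≤ H (gradient (fun w : EucSp n =>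
                (u y₀ + -(c * ‖y₀ - z‖ ^ alphaC k₁ k₂))
                  + c * (inner ℝ (w - z) (w - z) : ℝ) ^ (alphaC k₁ k₂ / 2)) y₀)
              (hessianAt (fun w : EucSp n =>
                (u y₀ + -(c * ‖y₀ - z‖ ^ alphaC k₁ k₂))
                  + c * (inner ℝ (w - z) (w - z) : ℝ) ^ (alphaC k₁ k₂ / 2)) y₀) := by
            rw [hHv]
            calc G + ε = (c * alphaC k₁ k₂) ^ (k₁ + k₂) * m1 H (k₁ / (k₁ + k₂)) := hkey.symm
              _ ≤ (c * alphaC k₁ k₂) ^ (k₁ + k₂) *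
                  H (‖y₀ - z‖⁻¹ • (y₀ - z))
                    ((1 : Mat n) - (k₁ / (k₁ + k₂)) • outer (‖y₀ - z‖⁻¹ • (y₀ - z))) :=
                mul_le_mul_of_nonneg_left hm (Real.rpow_nonneg (by positivity) _)
          have h0' : H (gradient (fun w : EucSp n =>
                (u y₀ + -(c * ‖y₀ - z‖ ^ alphaC k₁ k₂))
                  + c * (inner ℝ (w - z) (w - z) : ℝ) ^ (alphaC k₁ k₂ / 2)) y₀)
              (hessianAt (fun w : EucSp n =>
                (u y₀ + -(c * ‖y₀ - z‖ ^ alphaC k₁ k₂))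
                  + c * (inner ℝ (w - z) (w - z) : ℝ) ^ (alphaC k₁ k₂ / 2)) y₀) + f y₀ ≤ 0 := h0
          have hfy := hGf y₀ hy₀Ω
          linarith
    have hz₀R : ∀ w ∈ closure Ω, ‖w - z₀‖ ≤ R₀ + ε := fun w hw =>
      le_trans (hKR w hw) (by linarith)
    have hz₁R : ∀ w ∈ closure Ω, ‖w - (z₀ + ε • e₀)‖ ≤ R₀ + ε := by
      intro w hw
      have h1 : w - (z₀ + ε • e₀) = (w - z₀) - ε • e₀ := by abel
      rw [h1]
      refine le_trans (norm_sub_le _ _) ?_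
      rw [norm_smul, he₀, mul_one, Real.norm_eq_abs, abs_of_pos hε]
      exact add_le_add (hKR w hw) le_rfl
    have hd1 : ‖(z₀ + ε • e₀) - z₀‖ = ε := by
      rw [add_sub_cancel_left, norm_smul, he₀, mul_one, Real.norm_eq_abs, abs_of_pos hε]
    have hd2 : ‖z₀ - (z₀ + ε • e₀)‖ = ε := by
      rw [show z₀ - (z₀ + ε • e₀) = -(ε • e₀) by abel, norm_neg, norm_smul, he₀, mul_one,
        Real.norm_eq_abs, abs_of_pos hε]
    have hfinal : ∀ z : EucSp n, (∀ w ∈ closure Ω, ‖w - z‖ ≤ R₀ + ε) →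
        (∃ yb ∈ frontier Ω, ∀ w ∈ closure Ω,
            u yb + -(c * ‖yb - z‖ ^ alphaC k₁ k₂) ≤ u w + -(c * ‖w - z‖ ^ alphaC k₁ k₂)) →
        mh - c * (R₀ + ε) ^ alphaC k₁ k₂ ≤ u x := by
      rintro z hzR ⟨yb, hybfr, hyb⟩
      have h1 := hyb x (hΩK hx)
      have h2 : mh ≤ u yb := le_trans (hmh yb hybfr) (hbc yb hybfr)
      have h3 : ‖yb - z‖ ^ alphaC k₁ k₂ ≤ (R₀ + ε) ^ alphaC k₁ k₂ :=
        Real.rpow_le_rpow (norm_nonneg _) (hzR yb (hfrK hybfr)) hα.le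
      have h4 : (0:ℝ) ≤ c * ‖x - z‖ ^ alphaC k₁ k₂ := by positivity
      have h5 : c * ‖yb - z‖ ^ alphaC k₁ k₂ ≤ c * (R₀ + ε) ^ alphaC k₁ k₂ :=
        mul_le_mul_of_nonneg_left h3 hc.le
      linarith
    rcases hcenter z₀ hz₀R with hgood | ⟨hz₀Ω, hb₀⟩
    · exact hfinal z₀ hz₀R hgood
    · rcases hcenter (z₀ + ε • e₀) hz₁R with hgood | ⟨hz₁Ω, hb₁⟩
      · exact hfinal (z₀ + ε • e₀) hz₁R hgood
      · exfalso
        have h1 := hb₀ (z₀ + ε • e₀) (hΩK hz₁Ω)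
        have h2 := hb₁ z₀ (hΩK hz₀Ω)
        rw [hd1] at h1
        rw [hd2] at h2
        have h3 : 0 < c * ε ^ alphaC k₁ k₂ := by positivity
        linarith
  have hlim : Tendsto (fun m : ℕ => mh -
      (sigmaC H k₁ k₂ * (G + 1/((m:ℝ)+1)) ^ (1 / (k₁ + k₂))) * (R₀ + 1/((m:ℝ)+1)) ^ alphaC k₁ k₂)
      atTop (𝓝 (mh - sigmaC H k₁ k₂ * G ^ (1 / (k₁ + k₂)) * R₀ ^ alphaC k₁ k₂)) := by
    have h0 : Tendsto (fun m : ℕ => 1/((m:ℝ)+1)) atTop (𝓝 0) :=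
      tendsto_one_div_add_atTop_nhds_zero_nat
    have hF : Tendsto (fun m : ℕ => (G + 1/((m:ℝ)+1)) ^ (1 / (k₁ + k₂))) atTop
        (𝓝 (G ^ (1 / (k₁ + k₂)))) := by
      have h1 : Tendsto (fun m : ℕ => G + 1/((m:ℝ)+1)) atTop (𝓝 (G + 0)) :=
        tendsto_const_nhds.add h0
      rw [add_zero] at h1
      exact (Real.continuousAt_rpow_const G _ (Or.inr (by positivity))).tendsto.comp h1
    have hR : Tendsto (fun m : ℕ => (R₀ + 1/((m:ℝ)+1)) ^ alphaC k₁ k₂) atTop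
        (𝓝 (R₀ ^ alphaC k₁ k₂)) := by
      have h1 : Tendsto (fun m : ℕ => R₀ + 1/((m:ℝ)+1)) atTop (𝓝 (R₀ + 0)) :=
        tendsto_const_nhds.add h0
      rw [add_zero] at h1
      exact (Real.continuousAt_rpow_const R₀ _ (Or.inl hR₀.ne')).tendsto.comp h1
    exact tendsto_const_nhds.sub ((tendsto_const_nhds.mul hF).mul hR)
  exact le_of_tendsto hlim (Eventually.of_forall fun m => main (1/((m:ℝ)+1)) (by positivity))

/-- A priori bounds for inhomogeneous equations (Lemma 6.3). -/
theorem stmt_8 {n : ℕ} (hn : 2 ≤ n) (Ω : Set (EucSp n)) (hΩ : IsBoundedDomain Ω)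
    (H : EucSp n → Mat n → ℝ) (hH : Continuous fun q : EucSp n × Mat n => H q.1 q.2)
    (k₁ k₂ : ℝ) (hA : CondA H) (hB : CondB H k₁ k₂) (hC : CondC H k₁ k₂)
    (f : EucSp n → ℝ) (hfc : ContinuousOn f Ω) (hfb : ∃ M : ℝ, ∀ x ∈ Ω, |f x| ≤ M)
    (h : EucSp n → ℝ) (hhc : ContinuousOn h (frontier Ω))
    (z₀ : EucSp n) (R₀ : ℝ) (hR₀ : 0 < R₀) (hΩR : Ω ⊆ Metric.ball z₀ R₀) :
    (∀ u : EucSp n → ℝ, UpperSemicontinuousOn u (closure Ω) →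
      ViscSubSoln H (fun x _ => f x) Ω u → (∀ x ∈ frontier Ω, u x ≤ h x) →
      ∀ x ∈ Ω, u x ≤ sSup (h '' frontier Ω) +
        sigmaC H k₁ k₂ * sSup ((fun x => max (f x) 0) '' Ω) ^ (1 / (k₁ + k₂)) *
          R₀ ^ alphaC k₁ k₂) ∧
    (∀ u : EucSp n → ℝ, LowerSemicontinuousOn u (closure Ω) →
      ViscSuperSoln H (fun x _ => f x) Ω u → (∀ x ∈ frontier Ω, h x ≤ u x) →
      ∀ x ∈ Ω, sInf (h '' frontier Ω) -
        sigmaC H k₁ k₂ * |sInf ((fun x => min (f x) 0) '' Ω)| ^ (1 / (k₁ + k₂)) *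
          R₀ ^ alphaC k₁ k₂ ≤ u x) := by
  constructor
  · intro u husc hsub hbc x hxΩ
    exact partI hn Ω hΩ H hH k₁ k₂ hB hC f hfb h hhc z₀ R₀ hR₀ hΩR u husc hsub hbc x hxΩ
  · intro u hlsc hsup hbc x hxΩ
    exact partII hn Ω hΩ H hH k₁ k₂ hB hC f hfb h hhc z₀ R₀ hR₀ hΩR u hlsc hsup hbc x hxΩ

end
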